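/- Let q : ℝ → ℝ satisfy (A1) q(0) = q(1) = 0, (A2) q is twice differentiable on [0,1], and (A3) q is strictly concave on [0,1], with q'(0) > 0. Then for every c with 0 < c < q'(0), there exists a unique u ∈ (0,1) such that q'(u)/(1 + q(u))² = c. -/

import Mathlib

open Set

/-- If `q` satisfies (A1)-(A3) and `q' 0 > 0`, then for every `0 < c < q' 0` there is a
unique `u ∈ (0,1)` with `q' u / (1 + q u)^2 = c`. -/
theorem exists_unique_ubar (q : ℝ → ℝ)
    (hq0 : q 0 = 0) (hq1 : q 1 = 0)
    (hq2 : ∀ u ∈ Set.Icc (0:ℝ) 1, DifferentiableAt ℝ q u ∧ DifferentiableAt ℝ (deriv q) u)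
    (hqc : StrictConcaveOn ℝ (Set.Icc (0:ℝ) 1) q)
    (hq'0 : 0 < deriv q 0) :
    ∀ c : ℝ, 0 < c → c < deriv q 0 →
      ∃! u : ℝ, u ∈ Set.Ioo (0:ℝ) 1 ∧ deriv q u / (1 + q u) ^ 2 = c := by
  intro c hc hclt
  have h0mem : (0:ℝ) ∈ Icc (0:ℝ) 1 := by norm_num
  have h1mem : (1:ℝ) ∈ Icc (0:ℝ) 1 := by norm_num
  -- deriv q is strictly antitone on [0,1]
  have hanti : ∀ x ∈ Icc (0:ℝ) 1, ∀ y ∈ Icc (0:ℝ) 1, x < y → deriv q y < deriv q x := by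
    intro x hx y hy hxy
    exact (hqc.deriv_lt_slope hx hy hxy (hq2 y hy).1).trans
      (hqc.slope_lt_deriv hx hy hxy (hq2 x hx).1)
  -- q ≥ 0 on [0,1]
  have hqnonneg : ∀ u ∈ Icc (0:ℝ) 1, 0 ≤ q u := by
    intro u hu
    rcases eq_or_lt_of_le hu.1 with h | h
    · rw [← h, hq0]
    rcases eq_or_lt_of_le hu.2 with h' | h'
    · rw [h', hq1]
    have := hqc.2 h0mem h1mem (by norm_num)
      (show (0:ℝ) < 1 - u by linarith) (show (0:ℝ) < u from h) (by ring)
    simp [hq0, hq1] at this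
    linarith
  have hden : ∀ u ∈ Icc (0:ℝ) 1, (0:ℝ) < (1 + q u) ^ 2 := by
    intro u hu
    have := hqnonneg u hu
    positivity
  -- deriv q 1 < 0
  have hd1 : deriv q 1 < 0 := by
    have := hqc.deriv_lt_slope h0mem h1mem one_pos (hq2 1 h1mem).1
    rw [slope_def_field] at this
    simp [hq0, hq1] at this
    exact this
  set g : ℝ → ℝ := fun u => deriv q u / (1 + q u) ^ 2 with hg
  -- continuity of g on [0,1]
  have hqcont : ContinuousOn q (Icc (0:ℝ) 1) :=
    fun u hu => (hq2 u hu).1.continuousAt.continuousWithinAt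
  have hdcont : ContinuousOn (deriv q) (Icc (0:ℝ) 1) :=
    fun u hu => (hq2 u hu).2.continuousAt.continuousWithinAt
  have hgcont : ContinuousOn g (Icc (0:ℝ) 1) := by
    apply hdcont.div (((continuousOn_const.add hqcont)).pow 2)
    intro u hu
    exact (hden u hu).ne'
  -- existence via IVT
  have hg0 : g 0 = deriv q 0 := by simp [hg, hq0]
  have hg1 : g 1 = deriv q 1 := by simp [hg, hq1]
  have hub : c ∈ Ioo (g 1) (g 0) := by
    constructor
    · rw [hg1]; linarith
    · rw [hg0]; exact hclt
  obtain ⟨u, hu, hgu⟩ := intermediate_value_Ioo' (by norm_num : (0:ℝ) ≤ 1) hgcont hub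
  refine ⟨u, ⟨hu, hgu⟩, ?_⟩
  -- uniqueness
  have key : ∀ u₁ ∈ Ioo (0:ℝ) 1, ∀ u₂ ∈ Ioo (0:ℝ) 1, u₁ < u₂ →
      g u₁ = c → g u₂ = c → False := by
    intro u₁ hu₁ u₂ hu₂ hlt h₁ h₂
    have hu₁I : u₁ ∈ Icc (0:ℝ) 1 := Ioo_subset_Icc_self hu₁
    have hu₂I : u₂ ∈ Icc (0:ℝ) 1 := Ioo_subset_Icc_self hu₂
    have hd₂pos : 0 < deriv q u₂ := by
      have := hden u₂ hu₂I
      have : deriv q u₂ = c * (1 + q u₂) ^ 2 := by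
        simp only [hg] at h₂; rw [div_eq_iff (hden u₂ hu₂I).ne'] at h₂; linarith [h₂]
      rw [this]; exact mul_pos hc (hden u₂ hu₂I)
    -- q strictly increasing on [u₁, u₂]
    have hmono : StrictMonoOn q (Icc u₁ u₂) := by
      apply strictMonoOn_of_deriv_pos (convex_Icc _ _)
      · exact hqcont.mono (Icc_subset_Icc hu₁I.1 hu₂I.2)
      · intro t ht
        rw [interior_Icc] at ht
        have htI : t ∈ Icc (0:ℝ) 1 := ⟨le_of_lt (lt_of_le_of_lt hu₁I.1 ht.1),
          le_of_lt (lt_of_lt_of_le ht.2 hu₂I.2)⟩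
        exact hd₂pos.trans (hanti t htI u₂ hu₂I ht.2)
    have hqlt : q u₁ < q u₂ :=
      hmono (left_mem_Icc.mpr hlt.le) (right_mem_Icc.mpr hlt.le) hlt
    have hdenlt : (1 + q u₁) ^ 2 < (1 + q u₂) ^ 2 := by
      have h1 := hqnonneg u₁ hu₁I
      nlinarith
    have hdlt : deriv q u₂ < deriv q u₁ := hanti u₁ hu₁I u₂ hu₂I hlt
    have : g u₂ < g u₁ := by
      have hA : deriv q u₂ / (1 + q u₂) ^ 2 < deriv q u₂ / (1 + q u₁) ^ 2 :=
        div_lt_div_of_pos_left hd₂pos (hden u₁ hu₁I) hdenlt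
      have hB : deriv q u₂ / (1 + q u₁) ^ 2 < deriv q u₁ / (1 + q u₁) ^ 2 :=
        div_lt_div_of_pos_right hdlt (hden u₁ hu₁I)
      exact hA.trans hB
    rw [h₁, h₂] at this
    exact lt_irrefl c this
  rintro v ⟨hv, hgv⟩
  rcases lt_trichotomy v u with h | h | h
  · exact absurd (key v hv u hu h hgv hgu) not_false
  · exact h
  · exact absurd (key u hu v hv h hgu hgv) not_false
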